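/- Let a : ℕ → ℕ be a sequence, and let t ∈ ℂ with |t| < 1 be such that ∑_{n≥1} a(n)·|t|^n converges. Then the family n ↦ (1 − t^n)^{−a(n)} (n ≥ 1) has product equal to exp(∑_{p≥1} (1/p)·∑_{k≥1} a(k)·t^{p·k}); that is, the plethystic exponential of f(t) = ∑_{k≥1} a(k) t^k admits the product representation PE[f](t) = ∏_{n≥1} (1 − t^n)^{−a(n)}. -/

import Mathlib

open Complex

/-- Product formula for the plethystic exponential: for `a : ℕ → ℕ` and `t ∈ ℂ`
with `|t| < 1` such that `∑_{n ≥ 1} a(n) |t|^n` converges, the family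
`n ↦ (1 - t^n)^{-a(n)}` (for `n ≥ 1`) has product
`exp (∑_{p ≥ 1} (1/p) ∑_{k ≥ 1} a(k) t^(p k))`. -/
theorem plethystic_exponential_product (a : ℕ → ℕ) (t : ℂ)
    (ht : ‖t‖ < 1)
    (hsum : Summable fun n : ℕ => (a (n + 1) : ℝ) * ‖t‖ ^ (n + 1)) :
    HasProd (fun n : ℕ => (1 - t ^ (n + 1)) ^ (-(a (n + 1) : ℤ)))
      (Complex.exp (∑' p : ℕ, (1 / (p + 1 : ℂ)) *
        ∑' k : ℕ, (a (k + 1) : ℂ) * t ^ ((p + 1) * (k + 1)))) := by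
  set g : ℕ × ℕ → ℂ := fun x =>
    (1 / (x.2 + 1 : ℂ)) * ((a (x.1 + 1) : ℂ) * t ^ ((x.2 + 1) * (x.1 + 1))) with hg
  have habs : ∀ n : ℕ, ‖t‖ ^ (n + 1) < 1 := fun n =>
    pow_lt_one₀ (norm_nonneg t) ht n.succ_ne_zero
  have hz : ∀ n : ℕ, ‖t ^ (n + 1)‖ < 1 := by
    intro n; rw [norm_pow]; exact habs n
  -- summability of the double family
  have hgsum : Summable g := by
    apply Summable.of_norm
    have hS : Summable fun x : ℕ × ℕ =>
        ((a (x.1 + 1) : ℝ) * ‖t‖ ^ (x.1 + 1)) * ‖t‖ ^ x.2 :=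
      hsum.mul_of_nonneg (summable_geometric_of_lt_one (norm_nonneg t) ht)
        (fun n => mul_nonneg (Nat.cast_nonneg _) (pow_nonneg (norm_nonneg t) _))
        (fun n => pow_nonneg (norm_nonneg t) _)
    refine Summable.of_nonneg_of_le (fun _ => norm_nonneg _) ?_ hS
    rintro ⟨k, p⟩
    have hd : ‖((p : ℂ) + 1)‖ = (p : ℝ) + 1 := by
      rw [show ((p:ℂ)+1) = ((p+1 : ℕ) : ℂ) by push_cast; ring, Complex.norm_natCast]
      push_cast; ring
    have h1 : ‖(1 : ℂ) / (p + 1 : ℂ)‖ ≤ 1 := by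
      rw [norm_div, norm_one, hd, div_le_one (by positivity)]
      linarith [Nat.cast_nonneg (α := ℝ) p]
    have h2 : ‖t‖ ^ ((p + 1) * (k + 1)) ≤ ‖t‖ ^ (k + 1) * ‖t‖ ^ p := by
      rw [← pow_add]
      apply pow_le_pow_of_le_one (norm_nonneg t) ht.le
      nlinarith
    simp only [hg, norm_mul, norm_pow]
    calc ‖(1 : ℂ) / (p + 1 : ℂ)‖ * (‖(a (k + 1) : ℂ)‖ * ‖t‖ ^ ((p + 1) * (k + 1)))
        ≤ 1 * (‖(a (k + 1) : ℂ)‖ * (‖t‖ ^ (k + 1) * ‖t‖ ^ p)) := by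
          apply mul_le_mul h1
            (mul_le_mul_of_nonneg_left h2 (norm_nonneg _)) (by positivity) zero_le_one
      _ = (a (k + 1) : ℝ) * ‖t‖ ^ (k + 1) * ‖t‖ ^ p := by
          simp [Complex.norm_natCast]; ring
  -- fiberwise sums over p
  have hfib : ∀ k : ℕ, HasSum (fun p => g (k, p))
      (-(a (k + 1) : ℂ) * Complex.log (1 - t ^ (k + 1))) := by
    intro k
    have h0 := hasSum_taylorSeries_neg_log (z := t ^ (k + 1)) (hz k)
    have h1 : HasSum (fun p : ℕ => (t ^ (k + 1)) ^ (p + 1) / (p + 1 : ℂ))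
        (-Complex.log (1 - t ^ (k + 1))) := by
      have := (hasSum_nat_add_iff (f := fun p : ℕ => (t ^ (k + 1)) ^ p / (p : ℂ)) 1).mpr
        (by simpa using h0)
      simpa using this
    have h2 := h1.mul_left ((a (k + 1) : ℂ))
    have heq : (fun p : ℕ => g (k, p))
        = fun p : ℕ => (a (k + 1) : ℂ) * ((t ^ (k + 1)) ^ (p + 1) / (p + 1 : ℂ)) := by
      funext p
      simp only [hg]
      rw [show (p + 1) * (k + 1) = (k + 1) * (p + 1) by ring, pow_mul]
      ring
    rw [show -(a (k + 1) : ℂ) * Complex.log (1 - t ^ (k + 1))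
        = (a (k + 1) : ℂ) * -Complex.log (1 - t ^ (k + 1)) by ring, heq]
    exact h2
  have hsumc : HasSum (fun k : ℕ => -(a (k + 1) : ℂ) * Complex.log (1 - t ^ (k + 1)))
      (∑' x : ℕ × ℕ, g x) := hgsum.hasSum.prod_fiberwise hfib
  have hprod := hsumc.cexp
  have hne : ∀ n : ℕ, (1 : ℂ) - t ^ (n + 1) ≠ 0 := by
    intro n h
    have h2 : ‖t ^ (n + 1)‖ < 1 := by rw [norm_pow]; exact habs n
    rw [sub_eq_zero] at h
    rw [← h] at h2
    simp at h2
  have hfac : ∀ n : ℕ, (cexp ∘ fun k : ℕ => -(a (k + 1) : ℂ) * Complex.log (1 - t ^ (k + 1))) n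
      = (1 - t ^ (n + 1)) ^ (-(a (n + 1) : ℤ)) := by
    intro n
    simp only [Function.comp]
    rw [show -(a (n + 1) : ℂ) = ((-(a (n + 1) : ℤ) : ℤ) : ℂ) by push_cast; ring,
      Complex.exp_int_mul, Complex.exp_log (hne n)]
  -- swap the order of summation
  have h4 : HasSum (fun p : ℕ => ∑' k : ℕ, g (k, p)) (∑' x : ℕ × ℕ, g x) := by
    have hs := hgsum.prod_symm.hasSum
    have he : (∑' x : ℕ × ℕ, g x.swap) = ∑' x : ℕ × ℕ, g x :=
      (Equiv.prodComm ℕ ℕ).tsum_eq g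
    rw [he] at hs
    exact hs.prod_fiberwise fun p => (hgsum.prod_symm.prod_factor p).hasSum
  have hswap : (∑' x : ℕ × ℕ, g x) = ∑' p : ℕ, (1 / (p + 1 : ℂ)) *
      ∑' k : ℕ, (a (k + 1) : ℂ) * t ^ ((p + 1) * (k + 1)) := by
    rw [← h4.tsum_eq]
    exact tsum_congr fun p => by simp only [hg]; exact tsum_mul_left
  rw [← hswap]
  exact (funext hfac) ▸ hprod
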